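/- Fix τ > 1 and N ≥ 0. Then τ·log((1+N)τ/((1+N)τ - 1)) - (τ-1)·log(((1+N)τ - N)/((1+N)τ - 1 - N)) > 0. -/

import Mathlib

lemma log_ratio_lb (x : ℝ) (hx : 1 < x) : 1 / x < Real.log (x / (x - 1)) := by
  have hx0 : 0 < x := by linarith
  have hx1 : 0 < x - 1 := by linarith
  have hpos : 0 < (x - 1) / x := div_pos hx1 hx0
  have hne : (x - 1) / x ≠ 1 := by
    intro h
    have := (div_eq_one_iff_eq (ne_of_gt hx0)).mp h
    linarith
  have h := Real.log_lt_sub_one_of_pos hpos hne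
  have h1 : Real.log ((x - 1) / x) = - Real.log (x / (x - 1)) := by
    rw [Real.log_div (by linarith) (ne_of_gt hx0), Real.log_div (ne_of_gt hx0) (by linarith)]
    ring
  have h2 : (x - 1) / x - 1 = -(1 / x) := by field_simp; ring
  rw [h1, h2] at h
  linarith

lemma log_ratio_ub (x : ℝ) (hx : 1 < x) : Real.log (x / (x - 1)) < 1 / (x - 1) := by
  have hx0 : 0 < x := by linarith
  have hx1 : 0 < x - 1 := by linarith
  have hpos : 0 < x / (x - 1) := div_pos hx0 hx1
  have hne : x / (x - 1) ≠ 1 := by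
    intro h
    have := (div_eq_one_iff_eq (ne_of_gt hx1)).mp h
    linarith
  have h := Real.log_lt_sub_one_of_pos hpos hne
  have h2 : x / (x - 1) - 1 = 1 / (x - 1) := by field_simp; ring
  linarith [h, h2 ▸ h]

theorem amp_K0_derivative_pos (τ : ℝ) (hτ : 1 < τ) (N : ℝ) (hN : 0 ≤ N) :
    0 < τ * Real.log ((1 + N) * τ / ((1 + N) * τ - 1))
        - (τ - 1) * Real.log (((1 + N) * τ - N) / ((1 + N) * τ - 1 - N)) := by
  set a := (1 + N) * τ with ha
  have h1N : 0 < 1 + N := by linarith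
  have haN : 1 < a := by nlinarith
  have hbN : 1 < a - N := by nlinarith
  -- lower bound for the first term
  have hlb := log_ratio_lb a haN
  have hub := log_ratio_ub (a - N) hbN
  have hτ0 : 0 < τ := by linarith
  have hτ1 : 0 < τ - 1 := by linarith
  have e1 : τ * (1 / a) = 1 / (1 + N) := by
    rw [ha]; field_simp
  have e2 : (τ - 1) * (1 / (a - N - 1)) = 1 / (1 + N) := by
    have : a - N - 1 = (1 + N) * (τ - 1) := by rw [ha]; ring
    rw [this]; field_simp
  have t1 : 1 / (1 + N) < τ * Real.log (a / (a - 1)) := by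
    calc 1 / (1 + N) = τ * (1 / a) := e1.symm
      _ < τ * Real.log (a / (a - 1)) := by
          exact mul_lt_mul_of_pos_left hlb hτ0
  have t2 : (τ - 1) * Real.log ((a - N) / (a - N - 1)) < 1 / (1 + N) := by
    calc (τ - 1) * Real.log ((a - N) / (a - N - 1))
        < (τ - 1) * (1 / (a - N - 1)) := mul_lt_mul_of_pos_left hub hτ1
      _ = 1 / (1 + N) := e2
  have hrw : a - 1 - N = a - N - 1 := by ring
  rw [hrw]
  linarith
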